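/- In the same setting, the added state is orthogonal to all transformed eigenfunctions: ∫_{x1}^{x2} φ1^{(1)} φ_n^{(1)} = 0, where φ1^{(1)} = φ1/(1+⟨φ1,φ1⟩) and φ_n^{(1)} = φ_n − φ1^{(1)}⟨φ1,φ_n⟩. -/

import Mathlib

open Set MeasureTheory intervalIntegral Filter
open Topology

theorem am_added_state_orthogonal (x1 x2 : ℝ) (hlt : x1 < x2)
    (φ1 φn : ℝ → ℝ)
    (hφ1c : ContinuousOn φ1 (Ioo x1 x2))
    (hφnc : ContinuousOn φn (Ioo x1 x2))
    (hint1 : IntegrableOn (fun y => φ1 y * φn y) (Ioo x1 x2))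
    (hint2 : ∀ x ∈ Ioo x1 x2, IntegrableOn (fun y => φ1 y ^ 2) (Ioo x1 x))
    (hdiv : Tendsto (fun x => ∫ t in x1..x, φ1 t ^ 2)
      (nhdsWithin x2 (Iio x2)) atTop) :
    ∫ y in Ioo x1 x2,
      (φ1 y / (1 + ∫ t in x1..y, φ1 t ^ 2)) *
      (φn y - φ1 y / (1 + ∫ t in x1..y, φ1 t ^ 2) *
          ∫ t in x1..y, φ1 t * φn t) = 0 := by
  obtain ⟨Q, hQdef⟩ : ∃ Q : ℝ → ℝ, Q = fun x => ∫ t in x1..x, φ1 t ^ 2 := ⟨_, rfl⟩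
  obtain ⟨N, hNdef⟩ : ∃ N : ℝ → ℝ, N = fun x => ∫ t in x1..x, φ1 t * φn t := ⟨_, rfl⟩
  have hQ : ∀ y, (∫ t in x1..y, φ1 t ^ 2) = Q y := fun y => by rw [hQdef]
  have hN : ∀ y, (∫ t in x1..y, φ1 t * φn t) = N y := fun y => by rw [hNdef]
  simp only [hQ, hN] at hdiv ⊢
  -- basic positivity of the denominator
  have hQ0 : ∀ x ∈ Ico x1 x2, 0 ≤ Q x := by
    intro x hx
    rw [← hQ x]
    exact intervalIntegral.integral_nonneg hx.1 fun t _ => sq_nonneg _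
  have hD1 : ∀ x ∈ Ico x1 x2, (1 : ℝ) ≤ 1 + Q x := fun x hx => by
    linarith [hQ0 x hx]
  have hDne : ∀ x ∈ Ico x1 x2, (1 : ℝ) + Q x ≠ 0 := fun x hx => by
    have := hD1 x hx; positivity
  -- interval integrability of the integrands of Q and N
  have hQii : ∀ x ∈ Ioo x1 x2, IntervalIntegrable (fun y => φ1 y ^ 2) volume x1 x := by
    intro x hx
    rw [intervalIntegrable_iff_integrableOn_Ioo_of_le hx.1.le]
    exact hint2 x hx
  have hNii : ∀ x, x1 ≤ x → x ≤ x2 →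
      IntervalIntegrable (fun y => φ1 y * φn y) volume x1 x := by
    intro x h1 h2
    rw [intervalIntegrable_iff_integrableOn_Ioo_of_le h1]
    exact hint1.mono_set (Ioo_subset_Ioo le_rfl h2)
  -- derivatives of Q and N on the open interval
  have hQd : ∀ x ∈ Ioo x1 x2, HasDerivAt Q (φ1 x ^ 2) x := by
    intro x hx
    rw [hQdef]
    exact intervalIntegral.integral_hasDerivAt_right (hQii x hx)
      ((hφ1c.pow 2).stronglyMeasurableAtFilter isOpen_Ioo x hx)
      ((hφ1c.continuousAt (isOpen_Ioo.mem_nhds hx)).pow 2)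
  have hNd : ∀ x ∈ Ioo x1 x2, HasDerivAt N (φ1 x * φn x) x := by
    intro x hx
    rw [hNdef]
    exact intervalIntegral.integral_hasDerivAt_right (hNii x hx.1.le hx.2.le)
      ((hφ1c.mul hφnc).stronglyMeasurableAtFilter isOpen_Ioo x hx)
      ((hφ1c.continuousAt (isOpen_Ioo.mem_nhds hx)).mul
        (hφnc.continuousAt (isOpen_Ioo.mem_nhds hx)))
  have hQcIoo : ContinuousOn Q (Ioo x1 x2) := fun x hx =>
    (hQd x hx).continuousAt.continuousWithinAt
  have hQ1 : Q x1 = 0 := by rw [hQdef]; exact intervalIntegral.integral_same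
  -- continuity of Q on Icc x1 c for c < x2
  have hQcIcc : ∀ c ∈ Ioo x1 x2, ContinuousOn Q (Icc x1 c) := by
    intro c hc
    have h_int : IntegrableOn (fun y => φ1 y ^ 2) (Icc x1 c) :=
      (integrableOn_Icc_iff_integrableOn_Ioo).2 (hint2 c hc)
    have := intervalIntegral.continuousOn_primitive (f := fun y => φ1 y ^ 2)
      (a := x1) (b := c) (μ := volume) h_int
    refine ContinuousOn.congr this ?_
    intro x hx
    rw [hQdef]
    exact intervalIntegral.integral_of_le hx.1
  -- continuity of N on Icc x1 x2
  have hNc : ContinuousOn N (Icc x1 x2) := by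
    have h_int : IntegrableOn (fun y => φ1 y * φn y) (Icc x1 x2) :=
      (integrableOn_Icc_iff_integrableOn_Ioo).2 hint1
    have := intervalIntegral.continuousOn_primitive (f := fun y => φ1 y * φn y)
      (a := x1) (b := x2) (μ := volume) h_int
    refine ContinuousOn.congr this ?_
    intro x hx
    rw [hNdef]
    exact intervalIntegral.integral_of_le hx.1
  obtain ⟨C, hC⟩ := isCompact_Icc.exists_bound_of_continuousOn hNc
  -- the auxiliary function h
  set h : ℝ → ℝ := fun y => φ1 y ^ 2 / (1 + Q y) ^ 2 with hhdef
  have hcont_h : ContinuousOn h (Ioo x1 x2) := by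
    apply (hφ1c.pow 2).div ((continuousOn_const.add hQcIoo).pow 2)
    intro x hx
    exact pow_ne_zero 2 (hDne x ⟨hx.1.le, hx.2⟩)
  have h_nonneg : ∀ y, 0 ≤ h y := fun y => div_nonneg (sq_nonneg _) (sq_nonneg _)
  -- integrability of h on Ioc x1 c for c < x2
  have h_int_c : ∀ c ∈ Ioo x1 x2, IntegrableOn h (Ioc x1 c) := by
    intro c hc
    have hsub : Ioc x1 c ⊆ Ioo x1 x2 := fun y hy => ⟨hy.1, lt_of_le_of_lt hy.2 hc.2⟩
    refine Integrable.mono ((integrableOn_Ioc_iff_integrableOn_Ioo).2 (hint2 c hc))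
      ((hcont_h.mono hsub).aestronglyMeasurable measurableSet_Ioc) ?_
    filter_upwards [ae_restrict_mem measurableSet_Ioc] with y hy
    have hy' : y ∈ Ico x1 x2 := ⟨hy.1.le, lt_of_le_of_lt hy.2 hc.2⟩
    have h1 : (1 : ℝ) ≤ 1 + Q y := hD1 y hy'
    rw [Real.norm_eq_abs, Real.norm_eq_abs, abs_of_nonneg (h_nonneg y),
      abs_of_nonneg (sq_nonneg _)]
    rw [hhdef]
    calc φ1 y ^ 2 / (1 + Q y) ^ 2 ≤ φ1 y ^ 2 / 1 := by
          apply div_le_div_of_nonneg_left (sq_nonneg _) one_pos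
          nlinarith
      _ = φ1 y ^ 2 := div_one _
  -- the antiderivative of h is bounded, giving integrability of h on Ioo x1 x2
  have hG : ∀ c ∈ Ioo x1 x2, ∫ y in x1..c, h y = 1 - (1 + Q c)⁻¹ := by
    intro c hc
    have hIooc : Ioo x1 c ⊆ Ioo x1 x2 := Ioo_subset_Ioo le_rfl hc.2.le
    have key := intervalIntegral.integral_eq_sub_of_hasDerivAt_of_le
      (f := fun x => -(1 + Q x)⁻¹) (f' := h) hc.1.le
      (by
        apply ContinuousOn.neg
        apply ContinuousOn.inv₀ (continuousOn_const.add (hQcIcc c hc))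
        intro x hx
        exact hDne x ⟨hx.1, lt_of_le_of_lt hx.2 hc.2⟩)
      (by
        intro x hx
        have hx2 : x ∈ Ioo x1 x2 := hIooc hx
        have hd := (((hQd x hx2).const_add 1).inv
          (hDne x ⟨hx2.1.le, hx2.2⟩)).neg
        refine hd.congr_deriv ?_
        rw [hhdef]
        field_simp)
      (by
        rw [intervalIntegrable_iff_integrableOn_Ioc_of_le hc.1.le]
        exact h_int_c c hc)
    rw [key]
    simp only [hQ1]
    ring
  have h_int_full : IntegrableOn h (Ioo x1 x2) := by
    have hb : Tendsto (fun n : ℕ => x2 - (x2 - x1) / (n + 2)) atTop (𝓝 x2) := by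
      have : Tendsto (fun n : ℕ => (x2 - x1) / (n + 2)) atTop (𝓝 0) := by
        apply Tendsto.div_atTop tendsto_const_nhds
        apply tendsto_atTop_add_const_right
        exact tendsto_natCast_atTop_atTop
      simpa using tendsto_const_nhds.sub this
    have hmem : ∀ n : ℕ, x2 - (x2 - x1) / (n + 2) ∈ Ioo x1 x2 := by
      intro n
      have h2 : (0:ℝ) < (n:ℝ) + 2 := by positivity
      constructor
      · have : (x2 - x1) / (n + 2) < x2 - x1 := by
          apply div_lt_self (by linarith)
          have : (0:ℝ) ≤ (n:ℝ) := Nat.cast_nonneg n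
          linarith
        linarith
      · have : 0 < (x2 - x1) / (n + 2) := div_pos (by linarith) h2
        linarith
    have := MeasureTheory.integrableOn_Ioc_of_intervalIntegral_norm_bounded_right
      (f := h) (l := atTop) (I := 1) (a := x1)
      (b := fun n : ℕ => x2 - (x2 - x1) / (n + 2))
      (fun n => h_int_c _ (hmem n)) hb ?_
    · exact this.mono_set Ioo_subset_Ioc_self
    · apply Filter.Eventually.of_forall
      intro n
      have hc := hmem n
      have : ∫ x in Ioc x1 (x2 - (x2 - x1) / (n + 2)), ‖h x‖ =
          ∫ y in x1..(x2 - (x2 - x1) / (n + 2)), h y := by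
        rw [intervalIntegral.integral_of_le hc.1.le]
        congr 1
        funext y
        exact Real.norm_of_nonneg (h_nonneg y)
      rw [this, hG _ hc]
      have := hD1 _ ⟨hc.1.le, hc.2⟩
      have hpos : 0 < 1 + Q (x2 - (x2 - x1) / (n + 2)) := by linarith
      have : 0 ≤ (1 + Q (x2 - (x2 - x1) / (n + 2)))⁻¹ := by positivity
      linarith
  -- the integrand g
  set g : ℝ → ℝ := fun y =>
    φ1 y / (1 + Q y) * (φn y - φ1 y / (1 + Q y) * N y) with hgdef
  -- integrability of g on Ioo x1 x2
  have hgInt : IntegrableOn g (Ioo x1 x2) := by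
    have hA : IntegrableOn (fun y => (1 + Q y)⁻¹ * (φ1 y * φn y)) (Ioo x1 x2) := by
      apply Integrable.bdd_mul (c := 1) hint1
      · exact ((continuousOn_const.add hQcIoo).inv₀ fun x hx =>
          hDne x ⟨hx.1.le, hx.2⟩).aestronglyMeasurable measurableSet_Ioo
      · filter_upwards [ae_restrict_mem measurableSet_Ioo] with y hy
        have h1 := hD1 y ⟨hy.1.le, hy.2⟩
        rw [Real.norm_eq_abs, abs_of_nonneg (by positivity)]
        rw [inv_le_one_iff₀]
        right; exact h1
    have hB : IntegrableOn (fun y => N y * h y) (Ioo x1 x2) := by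
      apply Integrable.bdd_mul (c := C) h_int_full
      · exact (hNc.mono Ioo_subset_Icc_self).aestronglyMeasurable measurableSet_Ioo
      · filter_upwards [ae_restrict_mem measurableSet_Ioo] with y hy
        exact hC y (Ioo_subset_Icc_self hy)
    have := hA.sub hB
    refine this.congr ?_
    filter_upwards [ae_restrict_mem measurableSet_Ioo] with y hy
    have hne : (1 : ℝ) + Q y ≠ 0 := hDne y ⟨hy.1.le, hy.2⟩
    simp only [Pi.sub_apply, hgdef, hhdef]
    field_simp
  have hgii : IntervalIntegrable g volume x1 x2 := by
    rw [intervalIntegrable_iff_integrableOn_Ioo_of_le hlt.le]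
    exact hgInt
  -- derivative of F = N / (1 + Q)
  have hFd : ∀ x ∈ Ioo x1 x2, HasDerivAt (fun y => N y / (1 + Q y)) (g x) x := by
    intro x hx
    have hne : (1 : ℝ) + Q x ≠ 0 := hDne x ⟨hx.1.le, hx.2⟩
    have hd := (hNd x hx).div ((hQd x hx).const_add 1) hne
    refine hd.congr_deriv ?_
    rw [hgdef]
    field_simp
  -- limits at the endpoints
  have hmid : (x1 + x2) / 2 ∈ Ioo x1 x2 := ⟨by linarith, by linarith⟩
  have hnhds1 : 𝓝[>] x1 ≤ 𝓝[Icc x1 ((x1 + x2) / 2)] x1 := by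
    rw [← nhdsWithin_Ioo_eq_nhdsGT hmid.1]
    exact nhdsWithin_mono _ Ioo_subset_Icc_self
  have hnhds1' : 𝓝[>] x1 ≤ 𝓝[Icc x1 x2] x1 := by
    rw [← nhdsWithin_Ioo_eq_nhdsGT hlt]
    exact nhdsWithin_mono _ Ioo_subset_Icc_self
  have hnhds2 : 𝓝[<] x2 ≤ 𝓝[Icc x1 x2] x2 := by
    rw [← nhdsWithin_Ioo_eq_nhdsLT hlt]
    exact nhdsWithin_mono _ Ioo_subset_Icc_self
  have hQt1 : Tendsto Q (𝓝[>] x1) (𝓝 0) := by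
    have := (hQcIcc _ hmid x1 (left_mem_Icc.2 hmid.1.le)).mono_left hnhds1
    rwa [hQ1] at this
  have hN1 : N x1 = 0 := by rw [hNdef]; exact intervalIntegral.integral_same
  have hNt1 : Tendsto N (𝓝[>] x1) (𝓝 0) := by
    have := (hNc x1 (left_mem_Icc.2 hlt.le)).mono_left hnhds1'
    rwa [hN1] at this
  have ha : Tendsto (fun y => N y / (1 + Q y)) (𝓝[>] x1) (𝓝 0) := by
    have := hNt1.div (tendsto_const_nhds.add hQt1) (by norm_num : (1:ℝ) + 0 ≠ 0)
    simp at this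
    exact this
  have hNt2 : Tendsto N (𝓝[<] x2) (𝓝 (N x2)) :=
    (hNc x2 (right_mem_Icc.2 hlt.le)).mono_left hnhds2
  have hDinv : Tendsto (fun x => (1 + Q x)⁻¹) (𝓝[<] x2) (𝓝 0) := by
    have h1 : Tendsto (fun x => 1 + Q x) (𝓝[<] x2) atTop :=
      tendsto_atTop_add_const_left _ 1 hdiv
    exact h1.inv_tendsto_atTop
  have hb : Tendsto (fun y => N y / (1 + Q y)) (𝓝[<] x2) (𝓝 0) := by
    have := hNt2.mul hDinv
    simp only [mul_zero] at this
    refine this.congr fun y => ?_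
    rw [div_eq_mul_inv]
  -- fundamental theorem of calculus
  have key : ∫ y in x1..x2, g y = 0 - 0 :=
    intervalIntegral.integral_eq_sub_of_hasDerivAt_of_tendsto hlt hFd hgii ha hb
  have final : ∫ y in Ioo x1 x2, g y = 0 := by
    rw [← MeasureTheory.integral_Ioc_eq_integral_Ioo,
      ← intervalIntegral.integral_of_le hlt.le]
    rw [key]; ring
  calc ∫ y in Ioo x1 x2,
      φ1 y / (1 + Q y) * (φn y - φ1 y / (1 + Q y) * N y)
      = ∫ y in Ioo x1 x2, g y := by rw [hgdef]
    _ = 0 := final
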